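/- Let k ∈ ℝ and let f : [0,l] → ℝ be twice differentiable on (0,l) and continuous on [0,l], with f(0) = f(l) = 0, f''(t) + k·f(t) ≤ 0 for all t ∈ (0,l), and l < π/√k if k > 0. Then f(t) ≥ 0 for all t ∈ [0,l]. -/

import Mathlib

open Filter Set Topology

lemma sinh_le_mul_cosh_aux {a x : ℝ} (hx : 0 ≤ x) (hxa : x ≤ a) :
    Real.sinh x ≤ x * Real.cosh a := by
  have ha : 0 ≤ a := hx.trans hxa
  have hd : ∀ y : ℝ, HasDerivAt (fun y => y * Real.cosh a - Real.sinh y)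
      (Real.cosh a - Real.cosh y) y := by
    intro y
    have := ((hasDerivAt_id y).mul_const (Real.cosh a)).sub (Real.hasDerivAt_sinh y)
    rw [one_mul] at this
    exact this
  have hmono : MonotoneOn (fun y => y * Real.cosh a - Real.sinh y) (Icc 0 a) := by
    apply monotoneOn_of_deriv_nonneg (convex_Icc 0 a)
    · exact fun y _ => (hd y).continuousAt.continuousWithinAt
    · exact fun y _ => (hd y).differentiableAt.differentiableWithinAt
    · intro y hy
      rw [interior_Icc] at hy
      rw [(hd y).deriv]
      have : Real.cosh y ≤ Real.cosh a := by
        rw [Real.cosh_le_cosh, abs_of_nonneg hy.1.le, abs_of_nonneg ha]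
        exact hy.2.le
      linarith
  have := hmono ⟨le_rfl, ha⟩ ⟨hx, hxa⟩ hx
  simpa using this

lemma aux_comparison (k l : ℝ) (hl : 0 < l)
    (f : ℝ → ℝ) (hf : ContinuousOn f (Set.Icc 0 l))
    (hdiff : ∀ t ∈ Set.Ioo 0 l, DifferentiableAt ℝ f t)
    (hdiff2 : ∀ t ∈ Set.Ioo 0 l, DifferentiableAt ℝ (deriv f) t)
    (h0 : f 0 = 0) (hl0 : f l = 0)
    (hineq : ∀ t ∈ Set.Ioo 0 l, deriv (deriv f) t + k * f t ≤ 0)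
    (g g' : ℝ → ℝ)
    (hg1 : ∀ t, HasDerivAt g (g' t) t)
    (hg2 : ∀ t, HasDerivAt g' (-(k * g t)) t)
    (hg0 : g 0 = 0) (hg'0 : g' 0 = 1)
    (hgpos : ∀ t ∈ Set.Ioc 0 l, 0 < g t)
    (M : ℝ) (hM : 0 < M) (hgb : ∀ t ∈ Set.Ioc 0 l, g t ≤ M * t) :
    ∀ t ∈ Set.Icc 0 l, 0 ≤ f t := by
  intro t ht
  by_contra hneg
  push_neg at hneg
  have ht0 : 0 < t := by
    rcases ht.1.lt_or_eq with h | h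
    · exact h
    · exfalso; rw [← h, h0] at hneg; exact lt_irrefl 0 hneg
  have htl : t < l := by
    rcases ht.2.lt_or_eq with h | h
    · exact h
    · exfalso; rw [h, hl0] at hneg; exact lt_irrefl 0 hneg
  have htIoo : t ∈ Ioo (0:ℝ) l := ⟨ht0, htl⟩
  set W : ℝ → ℝ := fun s => f s * g' s - deriv f s * g s with hWdef
  have hWd : ∀ s ∈ Ioo (0:ℝ) l,
      HasDerivAt W (-((deriv (deriv f) s + k * f s) * g s)) s := by
    intro s hs
    have h1 : HasDerivAt f (deriv f s) s := (hdiff s hs).hasDerivAt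
    have h2 : HasDerivAt (deriv f) (deriv (deriv f) s) s := (hdiff2 s hs).hasDerivAt
    have := (h1.mul (hg2 s)).sub (h2.mul (hg1 s))
    exact this.congr_deriv (by ring)
  have hWmono : MonotoneOn W (Ioo 0 l) := by
    apply monotoneOn_of_deriv_nonneg (convex_Ioo 0 l)
    · exact fun s hs => (hWd s hs).continuousAt.continuousWithinAt
    · intro s hs
      rw [interior_Ioo] at hs
      exact (hWd s hs).differentiableAt.differentiableWithinAt
    · intro s hs
      rw [interior_Ioo] at hs
      rw [(hWd s hs).deriv]
      have h1 := hineq s hs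
      have h2 := hgpos s ⟨hs.1, hs.2.le⟩
      nlinarith
  by_cases hWt : 0 ≤ W t
  · -- h = f/g antitone on [t, l], h l = 0, so f t / g t ≥ 0, contradiction
    have hanti : AntitoneOn (fun s => f s / g s) (Icc t l) := by
      apply antitoneOn_of_deriv_nonpos (convex_Icc t l)
      · apply ContinuousOn.div (hf.mono (Icc_subset_Icc ht.1 le_rfl))
          (fun s _ => (hg1 s).continuousAt.continuousWithinAt)
        exact fun s hs => (hgpos s ⟨lt_of_lt_of_le ht0 hs.1, hs.2⟩).ne'
      · intro s hs
        rw [interior_Icc] at hs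
        have hs' : s ∈ Ioo (0:ℝ) l := ⟨ht0.trans hs.1, hs.2⟩
        exact ((hdiff s hs').hasDerivAt.div (hg1 s)
          (hgpos s ⟨hs'.1, hs'.2.le⟩).ne').differentiableAt.differentiableWithinAt
      · intro s hs
        rw [interior_Icc] at hs
        have hs' : s ∈ Ioo (0:ℝ) l := ⟨ht0.trans hs.1, hs.2⟩
        have hgs := hgpos s ⟨hs'.1, hs'.2.le⟩
        rw [show (fun s => f s / g s) = f / g from rfl, ((hdiff s hs').hasDerivAt.div (hg1 s) hgs.ne').deriv]
        have hWts : W t ≤ W s := hWmono htIoo hs' hs.1.le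
        apply div_nonpos_of_nonpos_of_nonneg
        · simp only [hWdef] at hWt hWts
          nlinarith
        · positivity
    have hgt := hgpos t ⟨ht0, htl.le⟩
    have hval : f l / g l ≤ f t / g t := hanti ⟨le_rfl, htl.le⟩ ⟨htl.le, le_rfl⟩ htl.le
    rw [hl0, zero_div] at hval
    have hlt : f t / g t < 0 := div_neg_of_neg_of_pos hneg hgt
    linarith
  · push_neg at hWt
    set c : ℝ := -W t with hcdef
    have hc : 0 < c := by simp [hcdef]; linarith
    set a : ℝ := c / M ^ 2 with hadef
    have ha : 0 < a := by positivity
    set H : ℝ → ℝ := fun s => f s / g s + a * s⁻¹ with hHdef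
    have hHmono : MonotoneOn H (Ioc 0 t) := by
      apply monotoneOn_of_deriv_nonneg (convex_Ioc 0 t)
      · apply ContinuousOn.add
        · apply ContinuousOn.div
            (hf.mono (fun s hs => ⟨hs.1.le, hs.2.trans htl.le⟩))
            (fun s _ => (hg1 s).continuousAt.continuousWithinAt)
          exact fun s hs => (hgpos s ⟨hs.1, hs.2.trans htl.le⟩).ne'
        · exact fun s hs => ((continuousAt_inv₀ hs.1.ne').const_smul a).continuousWithinAt
      · intro s hs
        rw [interior_Ioc] at hs
        have hs' : s ∈ Ioo (0:ℝ) l := ⟨hs.1, hs.2.trans htl⟩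
        have hgs := hgpos s ⟨hs'.1, hs'.2.le⟩
        exact (((hdiff s hs').hasDerivAt.div (hg1 s) hgs.ne').add
          ((hasDerivAt_inv hs.1.ne').const_mul a)).differentiableAt.differentiableWithinAt
      · intro s hs
        rw [interior_Ioc] at hs
        have hs' : s ∈ Ioo (0:ℝ) l := ⟨hs.1, hs.2.trans htl⟩
        have hgs := hgpos s ⟨hs'.1, hs'.2.le⟩
        have hD : HasDerivAt H ((deriv f s * g s - f s * g' s) / g s ^ 2 +
            a * (-(s ^ 2)⁻¹)) s :=
          ((hdiff s hs').hasDerivAt.div (hg1 s) hgs.ne').add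
            ((hasDerivAt_inv hs.1.ne').const_mul a)
        rw [hD.deriv]
        have hWst : W s ≤ W t := hWmono hs' htIoo hs.2.le
        have hnum : c ≤ deriv f s * g s - f s * g' s := by
          have h5 : c ≤ -W s := by simp only [hcdef]; linarith
          simp only [hWdef, neg_sub] at h5
          exact h5
        have hgb' : g s ≤ M * s := hgb s ⟨hs'.1, hs'.2.le⟩
        have key : a * (s ^ 2)⁻¹ ≤ (deriv f s * g s - f s * g' s) / g s ^ 2 := by
          have h1 : g s ^ 2 ≤ (M * s) ^ 2 := by nlinarith
          have h2 : c / (M * s) ^ 2 ≤ c / g s ^ 2 := by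
            apply div_le_div_of_nonneg_left hc.le (by positivity) h1
          have h3 : c / g s ^ 2 ≤ (deriv f s * g s - f s * g' s) / g s ^ 2 :=
            (div_le_div_iff_of_pos_right (by positivity)).mpr hnum
          have h4 : a * (s ^ 2)⁻¹ = c / (M * s) ^ 2 := by
            rw [hadef, mul_pow, ← div_div, div_eq_mul_inv _ (s ^ 2)]
          linarith
        linarith
    have hB : ∀ s ∈ Ioc (0:ℝ) t, f s ≤ (f t / g t + a * t⁻¹) * g s - a * (g s / s) := by
      intro s hs
      have hgs := hgpos s ⟨hs.1, hs.2.trans htl.le⟩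
      have h1 : H s ≤ H t := hHmono hs ⟨ht0, le_rfl⟩ hs.2
      simp only [hHdef] at h1
      have h2 : f s / g s ≤ (f t / g t + a * t⁻¹) - a * s⁻¹ := by linarith
      have h3 : f s ≤ ((f t / g t + a * t⁻¹) - a * s⁻¹) * g s := (div_le_iff₀ hgs).mp h2
      calc f s ≤ ((f t / g t + a * t⁻¹) - a * s⁻¹) * g s := h3
        _ = (f t / g t + a * t⁻¹) * g s - a * (g s / s) := by
          rw [div_eq_mul_inv]; ring
    have hfl : Tendsto f (𝓝[>] (0:ℝ)) (𝓝 0) := by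
      have h1 : ContinuousWithinAt f (Icc 0 l) 0 := hf 0 ⟨le_rfl, hl.le⟩
      have h2 : Tendsto f (𝓝[Ioc 0 l] 0) (𝓝 (f 0)) :=
        h1.mono_left (nhdsWithin_mono _ Ioc_subset_Icc_self)
      rw [h0, nhdsWithin_Ioc_eq_nhdsGT hl] at h2
      exact h2
    have hgl : Tendsto g (𝓝[>] (0:ℝ)) (𝓝 0) := by
      have h1 : Tendsto g (𝓝 0) (𝓝 (g 0)) := (hg1 0).continuousAt
      rw [hg0] at h1
      exact h1.mono_left nhdsWithin_le_nhds
    have hslope : Tendsto (fun s => g s / s) (𝓝[>] (0:ℝ)) (𝓝 1) := by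
      have h1 : HasDerivAt g 1 0 := hg'0 ▸ hg1 0
      have h2 := hasDerivAt_iff_tendsto_slope.mp h1
      have h3 : Tendsto (slope g 0) (𝓝[>] (0:ℝ)) (𝓝 1) :=
        h2.mono_left (nhdsWithin_mono _ (fun x hx => Set.mem_compl_singleton_iff.mpr (ne_of_gt hx)))
      refine h3.congr (fun s => ?_)
      simp [slope_def_field, hg0]
    have hrhs : Tendsto (fun s => (f t / g t + a * t⁻¹) * g s - a * (g s / s))
        (𝓝[>] (0:ℝ)) (𝓝 ((f t / g t + a * t⁻¹) * 0 - a * 1)) :=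
      (hgl.const_mul _).sub (hslope.const_mul a)
    have hle : (0:ℝ) ≤ (f t / g t + a * t⁻¹) * 0 - a * 1 := by
      refine le_of_tendsto_of_tendsto hfl hrhs ?_
      filter_upwards [Ioc_mem_nhdsGT ht0] with s hs
      exact hB s hs
    simp at hle
    linarith

/-- Comparison principle for genuinely twice differentiable `f` with `f'' + k f ≤ 0`. -/
theorem nonneg_of_classical_comparison (k l : ℝ) (hl : 0 < l)
    (hlπ : 0 < k → l < Real.pi / Real.sqrt k)
    (f : ℝ → ℝ) (hf : ContinuousOn f (Set.Icc 0 l))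
    (hdiff : ∀ t ∈ Set.Ioo 0 l, DifferentiableAt ℝ f t)
    (hdiff2 : ∀ t ∈ Set.Ioo 0 l, DifferentiableAt ℝ (deriv f) t)
    (h0 : f 0 = 0) (hl0 : f l = 0)
    (hineq : ∀ t ∈ Set.Ioo 0 l, deriv (deriv f) t + k * f t ≤ 0) :
    ∀ t ∈ Set.Icc 0 l, 0 ≤ f t := by
  rcases lt_trichotomy k 0 with hk | hk | hk
  · -- k < 0 : use sinh
    set c := Real.sqrt (-k) with hcdef
    have hcpos : 0 < c := Real.sqrt_pos.mpr (by linarith)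
    have hck : c * c = -k := Real.mul_self_sqrt (by linarith)
    have hlin : ∀ t : ℝ, HasDerivAt (fun t : ℝ => c * t) c t := fun t => by
      simpa using (hasDerivAt_id t).const_mul c
    apply aux_comparison k l hl f hf hdiff hdiff2 h0 hl0 hineq
      (fun t => Real.sinh (c * t) / c) (fun t => Real.cosh (c * t))
      ?_ ?_ (by simp) (by simp) ?_ (Real.cosh (c * l)) (Real.cosh_pos _) ?_
    · intro t
      have h2 := ((Real.hasDerivAt_sinh (c * t)).comp t (hlin t)).div_const c
      exact h2.congr_deriv (mul_div_cancel_right₀ _ hcpos.ne')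
    · intro t
      have h2 := (Real.hasDerivAt_cosh (c * t)).comp t (hlin t)
      exact h2.congr_deriv (by rw [show k = -(c * c) by linarith]; field_simp)
    · intro t ht
      exact div_pos (Real.sinh_pos_iff.mpr (mul_pos hcpos ht.1)) hcpos
    · intro t ht
      have h1 : Real.sinh (c * t) ≤ (c * t) * Real.cosh (c * l) :=
        sinh_le_mul_cosh_aux (mul_pos hcpos ht.1).le
          (mul_le_mul_of_nonneg_left ht.2 hcpos.le)
      rw [div_le_iff₀ hcpos]
      nlinarith [h1]
  · -- k = 0 : use identity
    subst hk
    apply aux_comparison 0 l hl f hf hdiff hdiff2 h0 hl0 hineq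
      (fun t => t) (fun _ => 1)
      (fun t => hasDerivAt_id t) ?_ rfl rfl (fun t ht => ht.1) 1 one_pos
      (fun t _ => by linarith)
    · intro t
      simpa using hasDerivAt_const t (1:ℝ)
  · -- k > 0 : use sin
    set c := Real.sqrt k with hcdef
    have hcpos : 0 < c := Real.sqrt_pos.mpr hk
    have hck : c * c = k := Real.mul_self_sqrt hk.le
    have hclπ : c * l < Real.pi := by
      have := hlπ hk
      rw [lt_div_iff₀ hcpos] at this
      linarith
    have hlin : ∀ t : ℝ, HasDerivAt (fun t : ℝ => c * t) c t := fun t => by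
      simpa using (hasDerivAt_id t).const_mul c
    apply aux_comparison k l hl f hf hdiff hdiff2 h0 hl0 hineq
      (fun t => Real.sin (c * t) / c) (fun t => Real.cos (c * t))
      ?_ ?_ (by simp) (by simp) ?_ 1 one_pos ?_
    · intro t
      have h2 := ((Real.hasDerivAt_sin (c * t)).comp t (hlin t)).div_const c
      exact h2.congr_deriv (mul_div_cancel_right₀ _ hcpos.ne')
    · intro t
      have h2 := (Real.hasDerivAt_cos (c * t)).comp t (hlin t)
      exact h2.congr_deriv (by rw [show k = c * c by linarith]; field_simp)
    · intro t ht
      apply div_pos _ hcpos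
      apply Real.sin_pos_of_pos_of_lt_pi (mul_pos hcpos ht.1)
      calc c * t ≤ c * l := mul_le_mul_of_nonneg_left ht.2 hcpos.le
        _ < Real.pi := hclπ
    · intro t ht
      have h1 : Real.sin (c * t) ≤ c * t := Real.sin_le (mul_pos hcpos ht.1).le
      rw [div_le_iff₀ hcpos]
      nlinarith [h1]
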